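/- The Petersen graph, i.e. the Kneser graph K(5,2), has metric dimension 3. -/

import Mathlib

/-- `S` is a resolving set for the graph `G`: every pair of distinct vertices is
resolved by some vertex of `S` (via the geodesic distance `SimpleGraph.dist`). -/
def IsResolvingSet {V : Type*} (G : SimpleGraph V) (S : Set V) : Prop :=
  ∀ u w : V, u ≠ w → ∃ v ∈ S, G.dist u v ≠ G.dist w v

/-- The metric dimension of `G`: the smallest size of a resolving set. -/
noncomputable def metricDim {V : Type*} (G : SimpleGraph V) : ℕ :=
  sInf {n : ℕ | ∃ S : Finset V, IsResolvingSet G (↑S) ∧ S.card = n}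

/-- The Kneser graph `K(n,k)`: vertices are the k-element subsets of an
`n`-element set, adjacent when they are disjoint. -/
def kneserGraph (n k : ℕ) (hk : k ≠ 0) : SimpleGraph {s : Finset (Fin n) // s.card = k} where
  Adj a b := Disjoint (a : Finset (Fin n)) (b : Finset (Fin n))
  symm := ⟨fun a b h => h.symm⟩
  loopless := ⟨fun a h => by
    have h0 : (a : Finset (Fin n)) = ∅ := disjoint_self.mp h
    exact hk (by simpa [h0] using a.2.symm)⟩

abbrev PV := {s : Finset (Fin 5) // s.card = 2}

def pdist (u w : PV) : ℕ :=
  if u = w then 0 else if Disjoint u.1 w.1 then 1 else 2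

lemma common_neighbor (u w : PV) (h1 : u ≠ w) (h2 : ¬ Disjoint u.1 w.1) :
    ∃ v : PV, Disjoint u.1 v.1 ∧ Disjoint v.1 w.1 := by
  revert h1 h2; revert u w; decide

lemma dist_eq_pdist (u w : PV) :
    (kneserGraph 5 2 (by norm_num)).dist u w = pdist u w := by
  set G := kneserGraph 5 2 (by norm_num)
  unfold pdist
  split_ifs with h1 h2
  · subst h1; simp
  · exact SimpleGraph.dist_eq_one_iff_adj.mpr h2
  · obtain ⟨v, hv1, hv2⟩ := common_neighbor u w h1 h2
    have hadj1 : G.Adj u v := hv1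
    have hadj2 : G.Adj v w := hv2
    set p : G.Walk u w := hadj1.toWalk.append hadj2.toWalk with hp
    have hr : G.Reachable u w := ⟨p⟩
    have hlen : p.length = 2 := by simp [hp]
    have hle : G.dist u w ≤ 2 := (SimpleGraph.dist_le p).trans hlen.le
    interval_cases h : G.dist u w
    · exact absurd ((hr.dist_eq_zero_iff).mp h) h1
    · exact absurd (SimpleGraph.dist_eq_one_iff_adj.mp h) h2
    · rfl

lemma resolving_three :
    IsResolvingSet (kneserGraph 5 2 (by norm_num))
      (↑({⟨{0,1}, rfl⟩, ⟨{0,2}, rfl⟩, ⟨{0,3}, rfl⟩} : Finset PV)) := by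
  intro u w h
  simp only [Finset.coe_insert, Finset.coe_singleton, Set.mem_insert_iff, Set.mem_singleton_iff,
    dist_eq_pdist]
  revert h; revert u w; decide

lemma no_two_key : ∀ v1 v2 : PV,
    ∃ u w : PV, u ≠ w ∧ pdist u v1 = pdist w v1 ∧ pdist u v2 = pdist w v2 := by
  decide

lemma no_two (v1 v2 : PV) :
    ¬ IsResolvingSet (kneserGraph 5 2 (by norm_num)) (↑({v1, v2} : Finset PV)) := by
  intro hres
  obtain ⟨u, w, huw, h1, h2⟩ := no_two_key v1 v2
  obtain ⟨v, hv, hne⟩ := hres u w huw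
  rw [dist_eq_pdist, dist_eq_pdist] at hne
  simp only [Finset.coe_insert, Finset.coe_singleton, Set.mem_insert_iff,
    Set.mem_singleton_iff] at hv
  rcases hv with rfl | rfl
  · exact hne h1
  · exact hne h2

theorem metricDim_petersenGraph :
    metricDim (kneserGraph 5 2 (by norm_num)) = 3 := by
  have h3 : (3 : ℕ) ∈ {n : ℕ | ∃ S : Finset PV,
      IsResolvingSet (kneserGraph 5 2 (by norm_num)) (↑S) ∧ S.card = 3} :=
    ⟨{⟨{0,1}, rfl⟩, ⟨{0,2}, rfl⟩, ⟨{0,3}, rfl⟩}, resolving_three, by decide⟩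
  refine le_antisymm (Nat.sInf_le h3) (le_csInf ⟨3, h3⟩ ?_)
  rintro n ⟨S, hS, rfl⟩
  by_contra hlt
  push_neg at hlt
  have hcard : S.card ≤ 2 := by omega
  obtain ⟨T, hST, hT⟩ := Finset.exists_superset_card_eq hcard (by decide :
    2 ≤ Fintype.card PV)
  obtain ⟨v1, v2, _, hT2⟩ := Finset.card_eq_two.mp hT
  apply no_two v1 v2
  rw [← hT2]
  intro u w huw
  obtain ⟨v, hv, hne⟩ := hS u w huw
  exact ⟨v, hST hv, hne⟩
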